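/- Let E be a Banach space with a Schauder basis such that every x = (x_0, x_1, …) ∈ E attains its supremum coordinate, i.e. there exists i₀ with |x_{i₀}| = sup_i |x_i|. Let L = (l_{ij}) be a (possibly unbounded) linear operator on E represented in this basis. If λ is an eigenvalue of L with eigenvector x ∈ E, then there exists i₀ ∈ ℕ such that |l_{i₀ i₀} - λ| ≤ ∑_{j ≠ i₀} |l_{i₀ j}|, i.e. λ lies in the i₀-th Gershgorin disk of L. -/

import Mathlib

open ENNReal

/-- Gershgorin localization for infinite matrices: every eigenvalue whose eigenvector attains
its supremum coordinate lies in some Gershgorin disk (with possibly infinite radius). -/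
theorem stmt5 (L : ℕ → ℕ → ℂ) (x : ℕ → ℂ) (lam : ℂ) (hx : x ≠ 0)
    (heig : ∀ i, HasSum (fun j => L i j * x j) (lam * x i))
    (hsup : ∃ i₀, ∀ i, ‖x i‖ ≤ ‖x i₀‖) :
    ∃ i₀ : ℕ, (‖L i₀ i₀ - lam‖₊ : ℝ≥0∞) ≤ ∑' j : {j : ℕ // j ≠ i₀}, (‖L i₀ (j : ℕ)‖₊ : ℝ≥0∞) := by
  obtain ⟨i₀, hi⟩ := hsup
  refine ⟨i₀, ?_⟩
  -- x i₀ ≠ 0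
  obtain ⟨k, hk⟩ : ∃ k, x k ≠ 0 := by
    by_contra h
    push_neg at h
    exact hx (funext h)
  have hx0 : 0 < ‖x i₀‖ := lt_of_lt_of_le (norm_pos_iff.mpr hk) (hi k)
  by_cases hS : (∑' j : {j : ℕ // j ≠ i₀}, (‖L i₀ (j : ℕ)‖₊ : ℝ≥0∞)) = ⊤
  · simp [hS]
  -- summability of the off-diagonal row
  have hs : Summable (fun j : {j : ℕ // j ≠ i₀} => ‖L i₀ (j : ℕ)‖₊) :=
    ENNReal.tsum_coe_ne_top_iff_summable.mp hS
  have hsR : Summable (fun j : {j : ℕ // j ≠ i₀} => ‖L i₀ (j : ℕ)‖) := by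
    simpa [← NNReal.summable_coe] using hs
  have hsumN : Summable (fun j : {j : ℕ // j ≠ i₀} => ‖L i₀ (j : ℕ) * x (j : ℕ)‖) := by
    refine Summable.of_nonneg_of_le (fun j => norm_nonneg _) (fun j => ?_) (hsR.mul_right ‖x i₀‖)
    rw [norm_mul]
    exact mul_le_mul_of_nonneg_left (hi _) (norm_nonneg _)
  have hsum2 : Summable (fun j : {j : ℕ // j ≠ i₀} => L i₀ (j : ℕ) * x (j : ℕ)) :=
    hsumN.of_norm
  -- the sum of the off-diagonal terms
  have key : (∑' j : {j : ℕ // j ≠ i₀}, L i₀ (j : ℕ) * x (j : ℕ))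
      = lam * x i₀ - L i₀ i₀ * x i₀ := by
    have hd : HasSum (fun j => if j = i₀ then L i₀ i₀ * x i₀ else 0) (L i₀ i₀ * x i₀) :=
      hasSum_ite_eq i₀ _
    have heq : (fun j => L i₀ j * x j - if j = i₀ then L i₀ i₀ * x i₀ else 0)
        = fun j => if j = i₀ then 0 else L i₀ j * x j := by
      funext j; by_cases h : j = i₀ <;> simp [h]
    have h3 : HasSum (fun j => if j = i₀ then 0 else L i₀ j * x j)
        (lam * x i₀ - L i₀ i₀ * x i₀) := heq ▸ ((heig i₀).sub hd)
    have hss : Function.support (fun j => if j = i₀ then 0 else L i₀ j * x j)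
        ⊆ {j : ℕ | j ≠ i₀} := by
      intro j hj
      simp only [Function.mem_support] at hj
      intro h
      exact hj (by simp [h])
    have h4 : HasSum (fun j : {j : ℕ // j ≠ i₀} =>
        if (j : ℕ) = i₀ then 0 else L i₀ (j : ℕ) * x (j : ℕ))
        (lam * x i₀ - L i₀ i₀ * x i₀) :=
      (hasSum_subtype_iff_of_support_subset hss).mpr h3
    have h5 : HasSum (fun j : {j : ℕ // j ≠ i₀} => L i₀ (j : ℕ) * x (j : ℕ))
        (lam * x i₀ - L i₀ i₀ * x i₀) := by
      refine h4.congr_fun fun j => ?_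
      simp [j.prop]
    exact h5.tsum_eq
  have hbound : ‖L i₀ i₀ - lam‖ * ‖x i₀‖ ≤
      (∑' j : {j : ℕ // j ≠ i₀}, ‖L i₀ (j : ℕ)‖) * ‖x i₀‖ := by
    have h1 : ‖L i₀ i₀ - lam‖ * ‖x i₀‖ = ‖∑' j : {j : ℕ // j ≠ i₀}, L i₀ (j : ℕ) * x (j : ℕ)‖ := by
      rw [key, ← norm_mul,
        show (L i₀ i₀ - lam) * x i₀ = -(lam * x i₀ - L i₀ i₀ * x i₀) by ring, norm_neg]
    rw [h1, ← tsum_mul_right]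
    refine (norm_tsum_le_tsum_norm hsumN).trans (Summable.tsum_le_tsum (fun j => ?_) hsumN
      (hsR.mul_right _))
    rw [norm_mul]
    exact mul_le_mul_of_nonneg_left (hi _) (norm_nonneg _)
  have hfin : ‖L i₀ i₀ - lam‖ ≤ ∑' j : {j : ℕ // j ≠ i₀}, ‖L i₀ (j : ℕ)‖ :=
    le_of_mul_le_mul_right hbound hx0
  rw [← ENNReal.coe_tsum hs]
  rw [ENNReal.coe_le_coe]
  have := NNReal.coe_tsum (L := SummationFilter.unconditional _) (f := fun j : {j : ℕ // j ≠ i₀} => ‖L i₀ (j : ℕ)‖₊)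
  rw [← NNReal.coe_le_coe, this]
  simpa using hfin
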